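/- Let x:(−∞,0]→ℝ be a Borel measurable function, let μ be a finite positive Borel measure on (−∞,0], and let {ε_m}⊂[0,1/5] be a sequence decreasing to ε₀∈[0,1/5]. Then haus( ∫_{−∞}^0 (χ_{ε_m}∘x) dμ , ∫_{−∞}^0 (χ_{ε₀}∘x) dμ ) → 0 as m→∞, where the integrals are Aumann integrals. -/
import Mathlib


open MeasureTheory Set Filter Topology Pointwise

noncomputable section

/-- Index set for the synaptic variables `z i j`, `i ≠ j`. -/
abbrev IdxZ (n : ℕ) := {p : Fin n × Fin n // p.1 ≠ p.2}

/-- The state space `ℝ^{n²} = ℝ^n × ℝ^{n(n-1)}`, with the norm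
`‖(x,z)‖ = max (‖x‖_∞) (‖z‖_∞)` (product of supremum norms). -/
abbrev NState (n : ℕ) := (Fin n → ℝ) × (IdxZ n → ℝ)

/-- The `C_γ` norm: `‖u‖_γ = sup_{t ≤ 0} e^{γ t} ‖u t‖`. -/
def gNorm (γ : ℝ) {E : Type*} [NormedAddCommGroup E] (u : ℝ → E) : ℝ :=
  ⨆ t : Iic (0 : ℝ), Real.exp (γ * t.1) * ‖u t.1‖

/-- Membership in `C_γ`: continuity on `(-∞,0]`, existence of a finite limit of
`e^{γ t} u t` as `t → -∞`, and boundedness of `e^{γ t} ‖u t‖` on `(-∞,0]`. -/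
def InC (γ : ℝ) {E : Type*} [NormedAddCommGroup E] [NormedSpace ℝ E] (u : ℝ → E) : Prop :=
  ContinuousOn u (Iic 0) ∧
    (∃ L : E, Tendsto (fun t => Real.exp (γ * t) • u t) atBot (𝓝 L)) ∧
    BddAbove (range fun t : Iic (0 : ℝ) => Real.exp (γ * t.1) * ‖u t.1‖)

/-- The history `u_t(s) = u (t+s)`. -/
def hist {E : Type*} (u : ℝ → E) (t : ℝ) : ℝ → E := fun s => u (t + s)

/-- The sigmoidal function `σ_ε (s) = 1/(1+e^{-s/ε})`. -/
def sigm (ε s : ℝ) : ℝ := 1 / (1 + Real.exp (-s / ε))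

/-- Hypothesis (D): `A i`, `B p` locally Lipschitz and bounded below by `α > 0`. -/
def HypD {n : ℕ} (α : ℝ) (A : Fin n → ℝ → ℝ) (B : IdxZ n → ℝ → ℝ) : Prop :=
  0 < α ∧ (∀ i, LocallyLipschitz (A i) ∧ ∀ s, α ≤ A i s) ∧
    ∀ p, LocallyLipschitz (B p) ∧ ∀ s, α ≤ B p s

/-- Hypothesis (M): `∫_{-∞}^0 e^{-γ t} dμ_p (t) < ∞`. -/
def HypM {n : ℕ} (γ : ℝ) (μ : IdxZ n → Measure ℝ) : Prop :=
  ∀ p, ∫⁻ t in Iic (0 : ℝ), ENNReal.ofReal (Real.exp (-γ * t)) ∂(μ p) < ⊤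

/-- Hypothesis (I): continuity of the external stimuli. -/
def HypI {n : ℕ} (Istim : Fin n → ℝ → ℝ) : Prop := ∀ i, Continuous (Istim i)

/-- Decay term `D`. -/
def decayT {n : ℕ} (A : Fin n → ℝ → ℝ) (B : IdxZ n → ℝ → ℝ) (u : ℝ → NState n) : NState n :=
  (fun i => -(A i ((u 0).1 i)) * (u 0).1 i, fun p => -(B p ((u 0).2 p)) * (u 0).2 p)

/-- Sigmoidal excitation and inhibition term `Σ^ε`. -/
def sigTerm {n : ℕ} (ε : ℝ) (μ : IdxZ n → Measure ℝ) (c d : IdxZ n → ℝ)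
    (Γ : Fin n → ℝ) (u : ℝ → NState n) : NState n :=
  (fun i => ∑ k : Fin n,
      if h : k ≠ i then
        ((u 0).2 ⟨(k, i), h⟩ - c ⟨(k, i), h⟩) *
          ∫ τ in Iic (0 : ℝ), sigm ε ((u τ).1 k - Γ k) ∂(μ ⟨(k, i), h⟩)
      else 0,
    fun p =>
      d p * (∫ τ in Iic (0 : ℝ), sigm ε ((u τ).1 p.1.1 - Γ p.1.1) ∂(μ p)) *
        max ((u 0).1 p.1.2) 0)

/-- Stimulus term `I(t) = ((I_i(t))_i, 0)`. -/
def stimT {n : ℕ} (Istim : Fin n → ℝ → ℝ) (t : ℝ) : NState n :=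
  (fun i => Istim i t, 0)

/-- Right-hand side `f_ε(t,u) = D(u) + Σ^ε(u) + I(t)` of the sigmoidal system. -/
def fEps {n : ℕ} (ε : ℝ) (A : Fin n → ℝ → ℝ) (B : IdxZ n → ℝ → ℝ)
    (μ : IdxZ n → Measure ℝ) (c d : IdxZ n → ℝ) (Γ : Fin n → ℝ)
    (Istim : Fin n → ℝ → ℝ) (t : ℝ) (u : ℝ → NState n) : NState n :=
  decayT A B u + sigTerm ε μ c d Γ u + stimT Istim t

/-- Solution of the sigmoidal system on `[t₀, t₁)` with initial datum `u₀` at `t₀`. -/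
def IsSigSolOn {n : ℕ} (ε : ℝ) (A : Fin n → ℝ → ℝ) (B : IdxZ n → ℝ → ℝ)
    (μ : IdxZ n → Measure ℝ) (c d : IdxZ n → ℝ) (Γ : Fin n → ℝ)
    (Istim : Fin n → ℝ → ℝ) (t₀ t₁ : ℝ) (u₀ u : ℝ → NState n) : Prop :=
  (∀ s ≤ (0 : ℝ), u (t₀ + s) = u₀ s) ∧ ContinuousOn u (Iio t₁) ∧
    ∀ t ∈ Ico t₀ t₁, HasDerivAt u (fEps ε A B μ c d Γ Istim t (hist u t)) t

/-- Solution of the sigmoidal system on the closed interval `[t₀, t₁]`. -/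
def IsSigSolOnC {n : ℕ} (ε : ℝ) (A : Fin n → ℝ → ℝ) (B : IdxZ n → ℝ → ℝ)
    (μ : IdxZ n → Measure ℝ) (c d : IdxZ n → ℝ) (Γ : Fin n → ℝ)
    (Istim : Fin n → ℝ → ℝ) (t₀ t₁ : ℝ) (u₀ u : ℝ → NState n) : Prop :=
  (∀ s ≤ (0 : ℝ), u (t₀ + s) = u₀ s) ∧ ContinuousOn u (Iic t₁) ∧
    ∀ t ∈ Ico t₀ t₁, HasDerivAt u (fEps ε A B μ c d Γ Istim t (hist u t)) t

/-- `b(ε) = ε log((1-ε)/ε)` for `ε ≠ 0`, `b(0) = 0`. -/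
def bfun (ε : ℝ) : ℝ := if ε = 0 then 0 else ε * Real.log ((1 - ε) / ε)

/-- The set-valued function `χ_ε`. -/
def chiSet (ε s : ℝ) : Set ℝ :=
  if s < -bfun ε then Icc 0 ε else if s ≤ bfun ε then Icc 0 1 else Icc (1 - ε) 1

/-- Aumann integral over `(-∞,0]` of a set-valued map `F` with respect to `μ`:
the set of integrals of integrable measurable selectors of `F`. -/
def aumann (F : ℝ → Set ℝ) (μ : Measure ℝ) : Set ℝ :=
  {y | ∃ s : ℝ → ℝ, Measurable s ∧ IntegrableOn s (Iic 0) μ ∧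
      (∀ t ≤ (0 : ℝ), s t ∈ F t) ∧ y = ∫ t in Iic (0 : ℝ), s t ∂μ}

/-- Directed Hausdorff pseudometric `haus(A,B) = sup_{a∈A} inf_{b∈B} |a-b|`. -/
def hausd (S T : Set ℝ) : ℝ :=
  sSup ((fun a => sInf ((fun b => |a - b|) '' T)) '' S)

/-- The `i`-th factor of `X^ε(u)`: the Minkowski sum over `k ≠ i` of
`(z_{ki}(0) - c_{ki}) • ∫ χ_ε(x_k(τ)-Γ_k) dμ_{ki}(τ)`. -/
def XsetX {n : ℕ} (ε : ℝ) (μ : IdxZ n → Measure ℝ) (c : IdxZ n → ℝ)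
    (Γ : Fin n → ℝ) (u : ℝ → NState n) (i : Fin n) : Set ℝ :=
  {y | ∃ g : Fin n → ℝ, g i = 0 ∧
      (∀ k, ∀ h : k ≠ i,
        g k ∈ ((u 0).2 ⟨(k, i), h⟩ - c ⟨(k, i), h⟩) •
          aumann (fun τ => chiSet ε ((u τ).1 k - Γ k)) (μ ⟨(k, i), h⟩)) ∧
      y = ∑ k, g k}

/-- The set-valued map `X^ε : C_γ → 𝒫(ℝ^{n²})`. -/
def Xset {n : ℕ} (ε : ℝ) (μ : IdxZ n → Measure ℝ) (c d : IdxZ n → ℝ)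
    (Γ : Fin n → ℝ) (u : ℝ → NState n) : Set (NState n) :=
  {v | (∀ i, v.1 i ∈ XsetX ε μ c Γ u i) ∧
      ∀ p : IdxZ n, v.2 p ∈ (d p * max ((u 0).1 p.1.2) 0) •
        aumann (fun τ => chiSet ε ((u τ).1 p.1.1 - Γ p.1.1)) (μ p)}

/-- Solution of the `ε`-inflated differential inclusion on `[t₀,t₁]` with initial
datum `u₀` at `t₀`: absolutely continuous on `[t₀,t₁]` (expressed in integral form)
with `u'(t) = D(u_t) + Σ(t) + I(t)` a.e. for some integrable selector `Σ(t) ∈ X^ε(u_t)`. -/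
def IsIncSolOn {n : ℕ} (ε : ℝ) (A : Fin n → ℝ → ℝ) (B : IdxZ n → ℝ → ℝ)
    (μ : IdxZ n → Measure ℝ) (c d : IdxZ n → ℝ) (Γ : Fin n → ℝ)
    (Istim : Fin n → ℝ → ℝ) (t₀ t₁ : ℝ) (u₀ u : ℝ → NState n) : Prop :=
  (∀ s ≤ (0 : ℝ), u (t₀ + s) = u₀ s) ∧ ContinuousOn u (Icc t₀ t₁) ∧
    ∃ S : ℝ → NState n,
      (∀ t ∈ Icc t₀ t₁, S t ∈ Xset ε μ c d Γ (hist u t)) ∧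
      IntegrableOn (fun s => decayT A B (hist u s) + S s + stimT Istim s) (Icc t₀ t₁) ∧
      ∀ t ∈ Icc t₀ t₁,
        u t = u₀ 0 + ∫ s in t₀..t, (decayT A B (hist u s) + S s + stimT Istim s)

/-- Clamped history: the canonical representative in `C_γ` of the history `u_t`. -/
def clampHist {n : ℕ} (u : ℝ → NState n) (t : ℝ) : ℝ → NState n :=
  fun s => u (t + min s 0)

/-- Attainability set `Φ^ε(t, t₀, u₀)` of the `ε`-inflated inclusion. -/
def attain {n : ℕ} (ε : ℝ) (A : Fin n → ℝ → ℝ) (B : IdxZ n → ℝ → ℝ)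
    (μ : IdxZ n → Measure ℝ) (c d : IdxZ n → ℝ) (Γ : Fin n → ℝ)
    (Istim : Fin n → ℝ → ℝ) (t t₀ : ℝ) (u₀ : ℝ → NState n) : Set (ℝ → NState n) :=
  {v | ∃ u, IsIncSolOn ε A B μ c d Γ Istim t₀ t u₀ u ∧ v = clampHist u t}

/-- Total mass `|μ_p|` of the measure `μ_p` on `(-∞,0]`. -/
def mTot {n : ℕ} (μ : IdxZ n → Measure ℝ) (p : IdxZ n) : ℝ := (μ p (Iic 0)).toReal

/-- Hypothesis (A). -/
def HypA {n : ℕ} (α : ℝ) (μ : IdxZ n → Measure ℝ) (d : IdxZ n → ℝ) : Prop :=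
  ∃ lx lz nx nz eta eps : IdxZ n → ℝ,
    (∀ p, lx p ∈ ({1, mTot μ p ^ 2, d p ^ 2, mTot μ p ^ 2 * d p ^ 2} : Set ℝ) ∧
        lz p ∈ ({1, mTot μ p ^ 2, d p ^ 2, mTot μ p ^ 2 * d p ^ 2} : Set ℝ) ∧
        lx p * lz p = mTot μ p ^ 2 * d p ^ 2 ∧
        nx p ∈ ({1, mTot μ p ^ 2} : Set ℝ) ∧ nz p ∈ ({1, mTot μ p ^ 2} : Set ℝ) ∧
        nx p * nz p = mTot μ p ^ 2 ∧ 0 < eta p ∧ 0 < eps p ∧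
        nz p / eta p + lz p / eps p < 2 * α) ∧
    ∀ i : Fin n,
      (∑ k : Fin n, if h : k ≠ i then
          nx ⟨(k, i), h⟩ * eta ⟨(k, i), h⟩ + lx ⟨(k, i), h⟩ * eps ⟨(k, i), h⟩
        else 0) < 2 * α

/-- Directed Hausdorff "distance" between subsets of `C_γ`, w.r.t. `‖·‖_γ`. -/
def setDistG (γ : ℝ) {n : ℕ} (S T : Set (ℝ → NState n)) : ℝ :=
  sSup ((fun a => sInf ((fun b => gNorm γ (fun s => a s - b s)) '' T)) '' S)



/-! ### Auxiliary lemmas for `stmt9` -/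

lemma bfun_zero : bfun 0 = 0 := by simp [bfun]

lemma tendsto_bfun_zero : Tendsto bfun (𝓝[>] (0:ℝ)) (𝓝 0) := by
  have h1 : Tendsto (fun e : ℝ => e * Real.log (1 - e)) (𝓝[>] (0:ℝ)) (𝓝 0) := by
    have hc : ContinuousAt (fun e : ℝ => e * Real.log (1 - e)) 0 := by
      have hl : ContinuousAt (fun e : ℝ => Real.log (1 - e)) 0 :=
        (Real.continuousAt_log (by norm_num)).comp
          (continuousAt_const.sub continuousAt_id)
      exact continuousAt_id.mul hl
    have := hc.continuousWithinAt (s := Ioi (0:ℝ))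
    simpa [ContinuousWithinAt] using this
  have h2 : Tendsto (fun e : ℝ => Real.log e * e) (𝓝[>] (0:ℝ)) (𝓝 0) := by
    simpa using tendsto_log_mul_rpow_nhdsGT_zero (r := 1) one_pos
  have hA : Tendsto (fun e : ℝ => e * Real.log (1 - e) - Real.log e * e)
      (𝓝[>] (0:ℝ)) (𝓝 0) := by simpa using h1.sub h2
  refine hA.congr' ?_
  have hIoo : Ioo (0:ℝ) 1 ∈ 𝓝[>] (0:ℝ) := Ioo_mem_nhdsGT_of_mem ⟨le_refl 0, one_pos⟩
  filter_upwards [hIoo] with e he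
  have he0 : (0:ℝ) < e := he.1
  have he1 : e < 1 := he.2
  rw [bfun, if_neg he0.ne', Real.log_div (by linarith) he0.ne']
  ring

lemma bfun_continuousOn : ContinuousOn bfun (Icc (0:ℝ) (1/5)) := by
  intro a ha
  rcases eq_or_lt_of_le ha.1 with h0 | h0
  · rw [← h0]
    unfold ContinuousWithinAt
    rw [bfun_zero]
    have hsub : Icc (0:ℝ) (1/5) ⊆ {0} ∪ Ioi 0 := by
      intro y hy
      rcases eq_or_lt_of_le hy.1 with h | h
      · exact Or.inl h.symm
      · exact Or.inr h
    refine Tendsto.mono_left ?_ (nhdsWithin_mono _ hsub)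
    rw [nhdsWithin_union, tendsto_sup]
    refine ⟨?_, tendsto_bfun_zero⟩
    rw [nhdsWithin_singleton]
    simpa [bfun_zero] using tendsto_pure_nhds bfun 0
  · have ha5 : a ≤ 1/5 := ha.2
    have h1a : (0:ℝ) < 1 - a := by linarith
    have hca : ContinuousAt bfun a := by
      have hdiv : ContinuousAt (fun e : ℝ => (1 - e) / e) a :=
        (continuousAt_const.sub continuousAt_id).div continuousAt_id h0.ne'
      have hlog : ContinuousAt (fun e : ℝ => Real.log ((1 - e) / e)) a :=
        (Real.continuousAt_log (by positivity)).comp hdiv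
      have hc : ContinuousAt (fun e : ℝ => e * Real.log ((1 - e) / e)) a :=
        continuousAt_id.mul hlog
      refine hc.congr ?_
      filter_upwards [eventually_ne_nhds h0.ne'] with e he
      rw [bfun, if_neg he]
    exact hca.continuousWithinAt

lemma bfun_strictMonoOn : StrictMonoOn bfun (Icc (0:ℝ) (1/5)) := by
  refine strictMonoOn_of_deriv_pos (convex_Icc _ _) bfun_continuousOn ?_
  intro a ha
  rw [interior_Icc] at ha
  have h0 : (0:ℝ) < a := ha.1
  have h5 : a < 1/5 := ha.2
  have h1a : (0:ℝ) < 1 - a := by linarith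
  have hv : HasDerivAt (fun e : ℝ => Real.log (1 - e) - Real.log e)
      ((1 - a)⁻¹ * (0 - 1) - a⁻¹) a := by
    have hl1 : HasDerivAt (fun e : ℝ => Real.log (1 - e)) ((1 - a)⁻¹ * (0 - 1)) a :=
      (Real.hasDerivAt_log h1a.ne').comp a ((hasDerivAt_const a (1:ℝ)).sub (hasDerivAt_id a))
    exact hl1.sub (Real.hasDerivAt_log h0.ne')
  have hu : HasDerivAt (fun e : ℝ => e * (Real.log (1 - e) - Real.log e))
      (1 * (Real.log (1 - a) - Real.log a) + a * ((1 - a)⁻¹ * (0 - 1) - a⁻¹)) a :=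
    (hasDerivAt_id a).mul hv
  have heq : (fun e : ℝ => e * (Real.log (1 - e) - Real.log e)) =ᶠ[𝓝 a] bfun := by
    filter_upwards [eventually_ne_nhds h0.ne', eventually_lt_nhds (by linarith : a < 1)]
      with e he he1
    rcases eq_or_ne e 0 with rfl | he0
    · exact absurd rfl he
    rw [bfun, if_neg he0, Real.log_div (by linarith) he0]
  have hb : HasDerivAt bfun
      (1 * (Real.log (1 - a) - Real.log a) + a * ((1 - a)⁻¹ * (0 - 1) - a⁻¹)) a :=
    hu.congr_of_eventuallyEq heq.symm
  rw [hb.deriv]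
  have hlog4 : Real.log 4 ≤ Real.log (1 - a) - Real.log a := by
    rw [← Real.log_div (by linarith) h0.ne']
    refine Real.log_le_log (by norm_num) ?_
    rw [le_div_iff₀ h0]; linarith
  have hlog4' : (5:ℝ)/4 < Real.log 4 := by
    have h4 : (4:ℝ) = 2 ^ 2 := by norm_num
    rw [h4, Real.log_pow]
    have := Real.log_two_gt_d9
    push_cast
    linarith
  have hfrac : a / (1 - a) ≤ 1/4 := by
    rw [div_le_iff₀ h1a]; linarith
  have ha' : a * (1 - a)⁻¹ = a / (1 - a) := by rw [div_eq_mul_inv]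
  have haa : a * a⁻¹ = 1 := mul_inv_cancel₀ h0.ne'
  nlinarith [hlog4, hlog4', hfrac, ha', haa]

lemma bfun_nonneg {e : ℝ} (he : e ∈ Icc (0:ℝ) (1/5)) : 0 ≤ bfun e := by
  have h := bfun_strictMonoOn.monotoneOn (⟨le_refl 0, by norm_num⟩ : (0:ℝ) ∈ Icc (0:ℝ) (1/5))
    he he.1
  rwa [bfun_zero] at h

lemma bfun_mono {e₁ e₂ : ℝ} (h1 : e₁ ∈ Icc (0:ℝ) (1/5)) (h2 : e₂ ∈ Icc (0:ℝ) (1/5))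
    (h : e₁ ≤ e₂) : bfun e₁ ≤ bfun e₂ :=
  bfun_strictMonoOn.monotoneOn h1 h2 h

/-- Lower endpoint of `chiSet e s`. -/
def loF (e s : ℝ) : ℝ := if s ≤ bfun e then 0 else 1 - e

/-- Upper endpoint of `chiSet e s`. -/
def hiF (e s : ℝ) : ℝ := if s < -bfun e then e else 1

lemma chiSet_eq_Icc {e s : ℝ} (hb : 0 ≤ bfun e) :
    chiSet e s = Icc (loF e s) (hiF e s) := by
  unfold chiSet loF hiF
  by_cases h1 : s < -bfun e
  · rw [if_pos h1, if_pos h1, if_pos (by linarith)]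
  · rw [if_neg h1]
    by_cases h2 : s ≤ bfun e
    · rw [if_pos h2, if_pos h2, if_neg h1]
    · rw [if_neg h2, if_neg h2, if_neg h1]

lemma loF_le_hiF {e : ℝ} (he : e ∈ Icc (0:ℝ) (1/5)) (s : ℝ) : loF e s ≤ hiF e s := by
  have hb := bfun_nonneg he
  have he0 := he.1
  unfold loF hiF
  by_cases h2 : s ≤ bfun e
  · rw [if_pos h2]
    split <;> linarith
  · push_neg at h2
    rw [if_neg (not_le.mpr h2), if_neg (not_lt.mpr (by linarith))]
    linarith

lemma norm_loF_le {e : ℝ} (he : e ∈ Icc (0:ℝ) (1/5)) (s : ℝ) : ‖loF e s‖ ≤ 1 := by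
  rw [Real.norm_eq_abs, loF]
  split
  · simp
  · rw [abs_of_nonneg (by linarith [he.2])]
    linarith [he.1]

lemma norm_hiF_le {e : ℝ} (he : e ∈ Icc (0:ℝ) (1/5)) (s : ℝ) : ‖hiF e s‖ ≤ 1 := by
  rw [Real.norm_eq_abs, hiF]
  split
  · rw [abs_of_nonneg he.1]
    linarith [he.2]
  · simp

lemma aumann_Icc (f g : ℝ → ℝ) (hf : Measurable f) (hg : Measurable g)
    (μ : Measure ℝ) (hfg : ∀ t ≤ (0:ℝ), f t ≤ g t)
    (hfi : IntegrableOn f (Iic 0) μ) (hgi : IntegrableOn g (Iic 0) μ) :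
    aumann (fun t => Icc (f t) (g t)) μ
      = Icc (∫ t in Iic (0:ℝ), f t ∂μ) (∫ t in Iic (0:ℝ), g t ∂μ) := by
  ext y
  constructor
  · rintro ⟨s, hsm, hsi, hmem, rfl⟩
    exact ⟨setIntegral_mono_on hfi hsi measurableSet_Iic fun t ht => (hmem t ht).1,
      setIntegral_mono_on hsi hgi measurableSet_Iic fun t ht => (hmem t ht).2⟩
  · rintro ⟨h1, h2⟩
    set If := ∫ t in Iic (0:ℝ), f t ∂μ with hIf
    set Ig := ∫ t in Iic (0:ℝ), g t ∂μ with hIg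
    by_cases hEq : Ig - If = 0
    · exact ⟨f, hf, hfi, fun t ht => ⟨le_refl _, hfg t ht⟩, by linarith⟩
    · set θ := (y - If) / (Ig - If) with hθ
      have hne : Ig ≠ If := sub_ne_zero.mp hEq
      have hIlt : If < Ig := lt_of_le_of_ne (h1.trans h2) hne.symm
      have hθ0 : 0 ≤ θ := div_nonneg (by linarith) (by linarith)
      have hθ1 : θ ≤ 1 := (div_le_one (by linarith)).mpr (by linarith)
      refine ⟨fun t => (1 - θ) * f t + θ * g t,
        ((hf.const_mul _).add (hg.const_mul _)),
        (hfi.const_mul _).add (hgi.const_mul _), ?_, ?_⟩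
      · intro t ht
        have hle := hfg t ht
        show f t ≤ (1 - θ) * f t + θ * g t ∧ (1 - θ) * f t + θ * g t ≤ g t
        constructor
        · nlinarith
        · nlinarith
      · rw [integral_add (hfi.const_mul _) (hgi.const_mul _), integral_const_mul,
          integral_const_mul, ← hIf, ← hIg]
        have hmul : θ * (Ig - If) = y - If := div_mul_cancel₀ _ hEq
        linear_combination -hmul

lemma abs_hausd_Icc_le {a b c d : ℝ} (hab : a ≤ b) (hcd : c ≤ d) :
    |hausd (Icc a b) (Icc c d)| ≤ max |a - c| |b - d| := by
  set M := max |a - c| |b - d| with hM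
  have hM0 : 0 ≤ M := le_trans (abs_nonneg _) (le_max_left _ _)
  have hinner : ∀ y ∈ Icc a b, sInf ((fun z => |y - z|) '' Icc c d) ∈ Icc 0 M := by
    intro y hy
    have hne : ((fun z => |y - z|) '' Icc c d).Nonempty := (nonempty_Icc.mpr hcd).image _
    have hbdd : BddBelow ((fun z => |y - z|) '' Icc c d) := by
      refine ⟨0, ?_⟩
      rintro v ⟨z, hz, rfl⟩
      exact abs_nonneg _
    constructor
    · refine le_csInf hne ?_
      rintro v ⟨z, hz, rfl⟩
      exact abs_nonneg _
    · set w := max c (min y d) with hw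
      have hwmem : w ∈ Icc c d := ⟨le_max_left _ _, max_le hcd (min_le_right _ _)⟩
      refine le_trans (csInf_le hbdd ⟨w, hwmem, rfl⟩) ?_
      rcases lt_or_ge y c with h1 | h1
      · have hwc : w = c := by
          rw [hw, min_eq_left (le_trans h1.le hcd), max_eq_left h1.le]
        rw [hwc]
        calc |y - c| = c - y := by rw [abs_sub_comm]; exact abs_of_nonneg (by linarith)
          _ ≤ c - a := by linarith [hy.1]
          _ ≤ |a - c| := by rw [abs_sub_comm]; exact le_abs_self _
          _ ≤ M := le_max_left _ _
      · rcases lt_or_ge d y with h2 | h2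
        · have hwd : w = d := by rw [hw, min_eq_right h2.le, max_eq_right hcd]
          rw [hwd]
          calc |y - d| = y - d := abs_of_nonneg (by linarith)
            _ ≤ b - d := by linarith [hy.2]
            _ ≤ |b - d| := le_abs_self _
            _ ≤ M := le_max_right _ _
        · have hwy : w = y := by rw [hw, min_eq_left h2, max_eq_right h1]
          rw [hwy]
          simpa using hM0
  have hSne : ((fun y => sInf ((fun z => |y - z|) '' Icc c d)) '' Icc a b).Nonempty :=
    (nonempty_Icc.mpr hab).image _
  have hub : ∀ v ∈ (fun y => sInf ((fun z => |y - z|) '' Icc c d)) '' Icc a b, v ≤ M := by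
    rintro v ⟨y, hy, rfl⟩
    exact (hinner y hy).2
  rw [abs_le]
  constructor
  · have hmem : sInf ((fun z => |a - z|) '' Icc c d)
        ∈ (fun y => sInf ((fun z => |y - z|) '' Icc c d)) '' Icc a b :=
      mem_image_of_mem _ (left_mem_Icc.mpr hab)
    have hle := le_csSup ⟨M, hub⟩ hmem
    have h0 := (hinner a (left_mem_Icc.mpr hab)).1
    unfold hausd
    linarith
  · exact csSup_le hSne hub

/-- convergence, in the directed Hausdorff pseudometric, of the Aumann
integrals of `χ_{ε_m} ∘ x` to that of `χ_{ε₀} ∘ x` as `ε_m ↓ ε₀`. -/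
theorem stmt9 (x : ℝ → ℝ) (hx : Measurable x) (μ : Measure ℝ) [IsFiniteMeasure μ]
    (ε : ℕ → ℝ) (hεr : ∀ m, ε m ∈ Icc (0 : ℝ) (1 / 5))
    (ε₀ : ℝ) (hε₀ : ε₀ ∈ Icc (0 : ℝ) (1 / 5))
    (hanti : Antitone ε) (hlim : Tendsto ε atTop (𝓝 ε₀)) :
    Tendsto (fun m => hausd (aumann (fun t => chiSet (ε m) (x t)) μ)
        (aumann (fun t => chiSet ε₀ (x t)) μ)) atTop (𝓝 0) := by
  classical
  have hεm0 : ∀ m, ε₀ ≤ ε m := fun m => hanti.le_of_tendsto hlim m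
  have hβ : ∀ m, bfun ε₀ ≤ bfun (ε m) := fun m => bfun_mono hε₀ (hεr m) (hεm0 m)
  have hβlim : Tendsto (fun m => bfun (ε m)) atTop (𝓝 (bfun ε₀)) := by
    have h1 : Tendsto ε atTop (𝓝[Icc (0:ℝ) (1/5)] ε₀) :=
      tendsto_nhdsWithin_of_tendsto_nhds_of_eventually_within _ hlim (Eventually.of_forall hεr)
    exact (bfun_continuousOn ε₀ hε₀).tendsto.comp h1
  have hmeaslo : ∀ e : ℝ, Measurable fun t => loF e (x t) := fun e =>
    Measurable.ite (measurableSet_le hx measurable_const) measurable_const measurable_const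
  have hmeashi : ∀ e : ℝ, Measurable fun t => hiF e (x t) := fun e =>
    Measurable.ite (measurableSet_lt hx measurable_const) measurable_const measurable_const
  have hintlo : ∀ e ∈ Icc (0:ℝ) (1/5), IntegrableOn (fun t => loF e (x t)) (Iic 0) μ := by
    intro e he
    refine (integrable_const (1:ℝ)).mono' (hmeaslo e).aestronglyMeasurable ?_
    exact ae_of_all _ fun t => norm_loF_le he (x t)
  have hinthi : ∀ e ∈ Icc (0:ℝ) (1/5), IntegrableOn (fun t => hiF e (x t)) (Iic 0) μ := by
    intro e he
    refine (integrable_const (1:ℝ)).mono' (hmeashi e).aestronglyMeasurable ?_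
    exact ae_of_all _ fun t => norm_hiF_le he (x t)
  have hrw : ∀ e ∈ Icc (0:ℝ) (1/5),
      aumann (fun t => chiSet e (x t)) μ
        = Icc (∫ t in Iic (0:ℝ), loF e (x t) ∂μ) (∫ t in Iic (0:ℝ), hiF e (x t) ∂μ) := by
    intro e he
    have hpt : (fun t => chiSet e (x t)) = fun t => Icc (loF e (x t)) (hiF e (x t)) := by
      funext t
      exact chiSet_eq_Icc (bfun_nonneg he)
    rw [hpt]
    exact aumann_Icc _ _ (hmeaslo e) (hmeashi e) μ (fun t _ => loF_le_hiF he (x t))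
      (hintlo e he) (hinthi e he)
  have hptlo : ∀ t : ℝ, Tendsto (fun m => loF (ε m) (x t)) atTop (𝓝 (loF ε₀ (x t))) := by
    intro t
    by_cases hs : x t ≤ bfun ε₀
    · have hz : ∀ m, loF (ε m) (x t) = 0 := fun m => if_pos (hs.trans (hβ m))
      have hz0 : loF ε₀ (x t) = 0 := if_pos hs
      rw [hz0]
      simpa [hz] using (tendsto_const_nhds : Tendsto (fun _ : ℕ => (0:ℝ)) atTop (𝓝 0))
    · push_neg at hs
      have hz0 : loF ε₀ (x t) = 1 - ε₀ := if_neg (not_le.mpr hs)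
      rw [hz0]
      refine (tendsto_const_nhds.sub hlim).congr' ?_
      filter_upwards [hβlim.eventually_lt_const hs] with m hm
      exact (if_neg (not_le.mpr hm)).symm
  have hpthi : ∀ t : ℝ, Tendsto (fun m => hiF (ε m) (x t)) atTop (𝓝 (hiF ε₀ (x t))) := by
    intro t
    by_cases hs : x t < -bfun ε₀
    · have hz0 : hiF ε₀ (x t) = ε₀ := if_pos hs
      rw [hz0]
      refine hlim.congr' ?_
      have hneg : Tendsto (fun m => -bfun (ε m)) atTop (𝓝 (-bfun ε₀)) := hβlim.neg
      filter_upwards [hneg.eventually_const_lt hs] with m hm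
      exact (if_pos hm).symm
    · push_neg at hs
      have hz : ∀ m, hiF (ε m) (x t) = 1 := fun m =>
        if_neg (not_lt.mpr (le_trans (by linarith [hβ m]) hs))
      have hz0 : hiF ε₀ (x t) = 1 := if_neg (not_lt.mpr hs)
      rw [hz0]
      simpa [hz] using (tendsto_const_nhds : Tendsto (fun _ : ℕ => (1:ℝ)) atTop (𝓝 1))
  have hconvlo : Tendsto (fun m => ∫ t in Iic (0:ℝ), loF (ε m) (x t) ∂μ) atTop
      (𝓝 (∫ t in Iic (0:ℝ), loF ε₀ (x t) ∂μ)) := by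
    refine tendsto_integral_of_dominated_convergence (fun _ => (1:ℝ))
      (fun m => (hmeaslo (ε m)).aestronglyMeasurable) (integrable_const _)
      (fun m => ae_of_all _ fun t => norm_loF_le (hεr m) (x t)) (ae_of_all _ fun t => hptlo t)
  have hconvhi : Tendsto (fun m => ∫ t in Iic (0:ℝ), hiF (ε m) (x t) ∂μ) atTop
      (𝓝 (∫ t in Iic (0:ℝ), hiF ε₀ (x t) ∂μ)) := by
    refine tendsto_integral_of_dominated_convergence (fun _ => (1:ℝ))
      (fun m => (hmeashi (ε m)).aestronglyMeasurable) (integrable_const _)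
      (fun m => ae_of_all _ fun t => norm_hiF_le (hεr m) (x t)) (ae_of_all _ fun t => hpthi t)
  have hmono_int : ∀ e ∈ Icc (0:ℝ) (1/5),
      (∫ t in Iic (0:ℝ), loF e (x t) ∂μ) ≤ ∫ t in Iic (0:ℝ), hiF e (x t) ∂μ := fun e he =>
    setIntegral_mono_on (hintlo e he) (hinthi e he) measurableSet_Iic
      fun t _ => loF_le_hiF he (x t)
  refine squeeze_zero_norm (a := fun m =>
      max |(∫ t in Iic (0:ℝ), loF (ε m) (x t) ∂μ) - ∫ t in Iic (0:ℝ), loF ε₀ (x t) ∂μ|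
        |(∫ t in Iic (0:ℝ), hiF (ε m) (x t) ∂μ) - ∫ t in Iic (0:ℝ), hiF ε₀ (x t) ∂μ|)
    (fun m => ?_) ?_
  · rw [Real.norm_eq_abs, hrw (ε m) (hεr m), hrw ε₀ hε₀]
    exact abs_hausd_Icc_le (hmono_int (ε m) (hεr m)) (hmono_int ε₀ hε₀)
  · have h1 : Tendsto (fun m =>
        |(∫ t in Iic (0:ℝ), loF (ε m) (x t) ∂μ) - ∫ t in Iic (0:ℝ), loF ε₀ (x t) ∂μ|)
        atTop (𝓝 0) := by
      simpa using (hconvlo.sub (tendsto_const_nhds (x := ∫ t in Iic (0:ℝ), loF ε₀ (x t) ∂μ))).abs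
    have h2 : Tendsto (fun m =>
        |(∫ t in Iic (0:ℝ), hiF (ε m) (x t) ∂μ) - ∫ t in Iic (0:ℝ), hiF ε₀ (x t) ∂μ|)
        atTop (𝓝 0) := by
      simpa using (hconvhi.sub (tendsto_const_nhds (x := ∫ t in Iic (0:ℝ), hiF ε₀ (x t) ∂μ))).abs
    simpa using h1.max h2


end
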